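/- Suppose G = (ℤ/3)² acts faithfully on ℙ²(ℂ) such that the action is free outside a finite set. Then there exist generators g₁, g₂ of G and homogeneous coordinates (x₀:x₁:x₂) such that g₁(x₀:x₁:x₂) = (x₀: ωx₁: ω²x₂) and g₂(x₀:x₁:x₂) = (x₁:x₂:x₀), where ω is a primitive third root of unity. -/

import Mathlib

open scoped LinearAlgebra.Projectivization

noncomputable section

/-- The complex projective plane `ℙ²(ℂ)`. -/
abbrev P2 := ℙ ℂ (Fin 3 → ℂ)

/-- The projective transformation of `ℙ²(ℂ)` induced by a linear automorphism of `ℂ³`. -/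
def projMap (φ : (Fin 3 → ℂ) ≃ₗ[ℂ] (Fin 3 → ℂ)) : P2 → P2 :=
  Projectivization.map φ.toLinearMap φ.injective

/-- The diagonal linear automorphism of `ℂ³` with entries `d`. -/
def diagEquiv (d : Fin 3 → ℂˣ) : (Fin 3 → ℂ) ≃ₗ[ℂ] (Fin 3 → ℂ) :=
  LinearEquiv.piCongrRight fun i => LinearEquiv.smulOfUnit (d i)

/-- The cyclic coordinate shift `(x₀, x₁, x₂) ↦ (x₁, x₂, x₀)` of `ℂ³`. -/
def cycEquiv : (Fin 3 → ℂ) ≃ₗ[ℂ] (Fin 3 → ℂ) :=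
  LinearEquiv.funCongrLeft ℂ ℂ (Equiv.addRight (1 : Fin 3))

namespace Z3aux


open Projectivization

lemma projMap_mk (φ : (Fin 3 → ℂ) ≃ₗ[ℂ] (Fin 3 → ℂ)) (v : Fin 3 → ℂ) (hv : v ≠ 0) :
    projMap φ (Projectivization.mk ℂ v hv) =
      Projectivization.mk ℂ (φ v) (by simpa using (φ.map_ne_zero_iff).2 hv) :=
  rfl

/-- If two linear automorphisms agree projectively, they differ by a scalar. -/
lemma scalar_of_projMap_eq (α β : (Fin 3 → ℂ) ≃ₗ[ℂ] (Fin 3 → ℂ))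
    (h : ∀ p, projMap α p = projMap β p) :
    ∃ c : ℂˣ, ∀ v, α v = (c : ℂ) • β v := by
  have key : ∀ v : Fin 3 → ℂ, v ≠ 0 → ∃ c : ℂ, α v = c • β v := by
    intro v hv
    have := h (Projectivization.mk ℂ v hv)
    rw [projMap_mk, projMap_mk, Projectivization.mk_eq_mk_iff'] at this
    obtain ⟨a, ha⟩ := this
    exact ⟨a, ha.symm⟩
  choose c hc using key
  have hβ : ∀ (v : Fin 3 → ℂ) (hv : v ≠ 0), β v ≠ 0 := fun v hv => by
    simpa using (β.map_ne_zero_iff).2 hv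
  have hcancel : ∀ (w : Fin 3 → ℂ) (hw : w ≠ 0) (t : ℂ), α w = t • β w → t = c w hw := by
    intro w hw t ht
    have h2 := hc w hw
    have h3 : (t - c w hw) • β w = 0 := by rw [sub_smul, ← ht, ← h2, sub_self]
    rcases smul_eq_zero.1 h3 with h4 | h4
    · exact sub_eq_zero.1 h4
    · exact absurd h4 (hβ w hw)
  -- c is constant
  have hconst : ∀ (v : Fin 3 → ℂ) (hv : v ≠ 0) (w : Fin 3 → ℂ) (hw : w ≠ 0),
      c v hv = c w hw := by
    intro v hv w hw
    by_cases hvw : v + w = 0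
    · -- w = -v
      have hwv : w = (-1 : ℂ) • v := by
        have : w = -v := by linear_combination (norm := module) hvw
        rw [this]; module
      have : α w = c v hv • β w := by
        rw [hwv, map_smul, map_smul, hc v hv, smul_comm]
      exact hcancel w hw _ this
    · have e1 : α (v + w) = c v hv • β v + c w hw • β w := by
        rw [map_add, hc v hv, hc w hw]
      have e2 : α (v + w) = c (v+w) hvw • β v + c (v+w) hvw • β w := by
        rw [hc (v+w) hvw, map_add, smul_add]
      have e3 : (c v hv - c (v+w) hvw) • β v = (c (v+w) hvw - c w hw) • β w := by
        have := e1.symm.trans e2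
        linear_combination (norm := module) this
      by_cases h5 : c (v+w) hvw = c w hw
      · -- LHS = 0
        have : (c v hv - c (v+w) hvw) • β v = 0 := by rw [e3, h5, sub_self, zero_smul]
        rcases smul_eq_zero.1 this with h6 | h6
        · rw [sub_eq_zero.1 h6, h5]
        · exact absurd h6 (hβ v hv)
      · -- β w is a multiple of β v, hence w multiple of v
        have hd : c (v+w) hvw - c w hw ≠ 0 := sub_ne_zero.2 h5
        have e4 : β w = (c (v+w) hvw - c w hw)⁻¹ • (c v hv - c (v+w) hvw) • β v := by
          rw [e3, inv_smul_smul₀ hd]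
        have e5 : w = (c (v+w) hvw - c w hw)⁻¹ • (c v hv - c (v+w) hvw) • v := by
          apply β.injective
          rw [map_smul, map_smul]; exact e4
        have e6 : α w = c v hv • β w := by
          rw [e5]
          simp only [map_smul, hc v hv]
          module
        exact hcancel w hw _ e6
  -- conclude
  have hone : (fun i => if i = 0 then (1:ℂ) else 0 : Fin 3 → ℂ) ≠ 0 := by
    intro h0
    have := congrFun h0 0
    simp at this
  set v₀ : Fin 3 → ℂ := (fun i => if i = 0 then (1:ℂ) else 0) with hv₀
  have hα0 : α v₀ ≠ 0 := by simpa using (α.map_ne_zero_iff).2 hone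
  have hc0 : c v₀ hone ≠ 0 := by
    intro h0
    have := hc v₀ hone
    rw [h0, zero_smul] at this
    exact hα0 this
  refine ⟨Units.mk0 _ hc0, fun v => ?_⟩
  by_cases hv : v = 0
  · simp [hv]
  · rw [hc v hv, hconst v hv v₀ hone]; rfl


/-- projMap of a composite. -/
lemma projMap_trans (α β : (Fin 3 → ℂ) ≃ₗ[ℂ] (Fin 3 → ℂ)) (p : P2) :
    projMap (α.trans β) p = projMap β (projMap α p) := by
  induction p using Projectivization.ind with
  | h v hv => rfl

/-- Proportional maps induce the same projective map. -/
lemma projMap_eq_of_smul (α β : (Fin 3 → ℂ) ≃ₗ[ℂ] (Fin 3 → ℂ)) (c : ℂ) (hc : c ≠ 0)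
    (h : ∀ v, α v = c • β v) (p : P2) : projMap α p = projMap β p := by
  induction p using Projectivization.ind with
  | h v hv =>
    rw [projMap_mk, projMap_mk, Projectivization.mk_eq_mk_iff']
    exact ⟨c, (h v).symm⟩

/-- Two independent eigenvectors with a common eigenvalue give infinitely many
fixed points of the projectivized map. -/
lemma infinite_fixed (φ : (Fin 3 → ℂ) ≃ₗ[ℂ] (Fin 3 → ℂ)) (x y : Fin 3 → ℂ) (μ : ℂ)
    (hx0 : x ≠ 0) (hxy : ∀ t : ℂ, y ≠ t • x)
    (hx : φ x = μ • x) (hy : φ y = μ • y) :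
    {p : P2 | projMap φ p = p}.Infinite := by
  have hy0 : y ≠ 0 := fun h => hxy 0 (by rw [h, zero_smul])
  have hμ : μ ≠ 0 := by
    intro h
    rw [h, zero_smul] at hx
    exact hx0 (φ.map_eq_zero_iff.1 hx)
  have hne : ∀ t : ℂ, x + t • y ≠ 0 := by
    intro t h
    by_cases ht : t = 0
    · rw [ht, zero_smul, add_zero] at h; exact hx0 h
    · apply hxy (-t⁻¹)
      have : y = -(t⁻¹) • x := by
        have : t • y = -x := by linear_combination (norm := module) h
        rw [← inv_smul_smul₀ ht y, this]; module
      exact this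
  apply Set.infinite_of_injective_forall_mem
    (f := fun t : ℂ => Projectivization.mk ℂ (x + t • y) (hne t))
  case hi =>
    intro s t hst
    rw [Projectivization.mk_eq_mk_iff'] at hst
    obtain ⟨a, ha⟩ := hst
    -- a • (x + t • y) = x + s • y
    have h1 : (a - 1) • x = (s - a * t) • y := by
      linear_combination (norm := module) ha
    by_cases hA : a - 1 = 0
    · have ha1 : a = 1 := by linear_combination hA
      have h2 : (s - t) • y = 0 := by
        rw [ha1] at h1
        linear_combination (norm := module) h1.symm
      rcases smul_eq_zero.1 h2 with h3 | h3
      · linear_combination h3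
      · exact absurd h3 hy0
    · exfalso
      by_cases hB : s - a * t = 0
      · rw [hB, zero_smul] at h1
        rcases smul_eq_zero.1 h1 with h3 | h3
        · exact hA h3
        · exact hx0 h3
      · apply hxy ((s - a*t)⁻¹ * (a - 1))
        rw [mul_smul, h1, inv_smul_smul₀ hB]
  case hf =>
    intro t
    show projMap φ _ = _
    rw [projMap_mk, Projectivization.mk_eq_mk_iff']
    refine ⟨μ, ?_⟩
    rw [map_add, map_smul, hx, hy]
    module

/-- cube roots of unity. -/
lemma cube_roots (ζ : ℂ) (hζ : IsPrimitiveRoot ζ 3) (x : ℂ) (hx : x ^ 3 = 1) :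
    x = 1 ∨ x = ζ ∨ x = ζ ^ 2 := by
  have hζ3 : ζ ^ 3 = 1 := hζ.pow_eq_one
  have hζ1 : ζ ≠ 1 := hζ.ne_one (by norm_num)
  have hsum : ζ ^ 2 + ζ + 1 = 0 := by
    have : (ζ - 1) * (ζ ^ 2 + ζ + 1) = 0 := by linear_combination hζ3
    rcases mul_eq_zero.1 this with h | h
    · exact absurd (sub_eq_zero.1 h) hζ1
    · exact h
  have : (x - 1) * ((x - ζ) * (x - ζ ^ 2)) = 0 := by
    linear_combination hx + (x - x^2) * hsum + (x - 1) * hζ3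
  rcases mul_eq_zero.1 this with h | h
  · exact Or.inl (sub_eq_zero.1 h)
  rcases mul_eq_zero.1 h with h | h
  · exact Or.inr (Or.inl (sub_eq_zero.1 h))
  · exact Or.inr (Or.inr (sub_eq_zero.1 h))


lemma projMap_refl (p : P2) : projMap (LinearEquiv.refl ℂ (Fin 3 → ℂ)) p = p := by
  induction p using Projectivization.ind with
  | h v hv => rfl


lemma zval : ∀ u : ZMod 3, ((u.val : ℕ) : ZMod 3) = u := by decide

lemma cube_one : ∀ g : Multiplicative (ZMod 3 × ZMod 3), g * g * g = 1 := by decide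

lemma gen_decomp (x : Multiplicative (ZMod 3 × ZMod 3)) :
    x = (Multiplicative.ofAdd ((1:ZMod 3),(0:ZMod 3))) ^ (x.toAdd.1.val) *
        (Multiplicative.ofAdd ((0:ZMod 3),(1:ZMod 3))) ^ (x.toAdd.2.val) := by
  apply Multiplicative.toAdd.injective
  rw [toAdd_mul, toAdd_pow, toAdd_pow]
  simp only [toAdd_ofAdd, Prod.smul_mk, Prod.mk_add_mk, smul_zero, nsmul_eq_mul, mul_one]
  rw [zval, zval]
  simp

lemma closure_gens :
    Subgroup.closure ({Multiplicative.ofAdd ((1:ZMod 3),(0:ZMod 3)),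
      Multiplicative.ofAdd ((0:ZMod 3),(1:ZMod 3))} :
        Set (Multiplicative (ZMod 3 × ZMod 3))) = ⊤ := by
  rw [eq_top_iff]
  rintro x -
  rw [gen_decomp x]
  exact mul_mem (pow_mem (Subgroup.subset_closure (by simp)) _)
    (pow_mem (Subgroup.subset_closure (by simp)) _)

lemma prim_of_cube (x : ℂ) (h3 : x ^ 3 = 1) (h1 : x ≠ 1) : IsPrimitiveRoot x 3 := by
  constructor
  · exact h3
  · intro l hl
    have hr : x ^ (l % 3) = 1 := by
      conv at hl => rw [← Nat.div_add_mod l 3]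
      rwa [pow_add, pow_mul, h3, one_pow, one_mul] at hl
    have hlt : l % 3 < 3 := Nat.mod_lt _ (by norm_num)
    interval_cases h : l % 3
    · exact Nat.dvd_of_mod_eq_zero h
    · rw [pow_one] at hr; exact absurd hr h1
    · exfalso; apply h1; linear_combination h3 - x * hr


end Z3aux

open Z3aux

set_option maxHeartbeats 1000000 in
/-- Suppose `G = (ℤ/3)²` acts faithfully on `ℙ²(ℂ)` by projective transformations,
with the action free outside a finite set (every nontrivial element has only finitely
many fixed points). Then there exist generators `g₁, g₂` of `G` and homogeneous
coordinates (i.e. a linear change of coordinates `ψ`) in which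
`g₁(x₀:x₁:x₂) = (x₀: ωx₁: ω²x₂)` and `g₂(x₀:x₁:x₂) = (x₁:x₂:x₀)`,
where `ω` is a primitive third root of unity. -/
theorem Z3Z3_action_on_P2_normal_form
    (ρ : Multiplicative (ZMod 3 × ZMod 3) →* Equiv.Perm P2)
    (hfaithful : Function.Injective ρ)
    -- the action is by projective linear transformations
    (hproj : ∀ g, ∃ φ : (Fin 3 → ℂ) ≃ₗ[ℂ] (Fin 3 → ℂ), ∀ p, ρ g p = projMap φ p)
    -- the action is free outside a finite set
    (hfree : ∀ g, g ≠ 1 → {p : P2 | ρ g p = p}.Finite) :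
    ∃ g₁ g₂ : Multiplicative (ZMod 3 × ZMod 3), Subgroup.closure {g₁, g₂} = ⊤ ∧
      ∃ (ψ : (Fin 3 → ℂ) ≃ₗ[ℂ] (Fin 3 → ℂ)) (ω : ℂˣ), IsPrimitiveRoot (ω : ℂ) 3 ∧
        (∀ p, ρ g₁ p = projMap ((ψ.symm.trans (diagEquiv ![1, ω, ω ^ 2])).trans ψ) p) ∧
        (∀ p, ρ g₂ p = projMap ((ψ.symm.trans cycEquiv).trans ψ) p) := by
  classical
  set g₁ : Multiplicative (ZMod 3 × ZMod 3) := Multiplicative.ofAdd ((1:ZMod 3),(0:ZMod 3))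
    with hg₁
  set g₂ : Multiplicative (ZMod 3 × ZMod 3) := Multiplicative.ofAdd ((0:ZMod 3),(1:ZMod 3))
    with hg₂
  obtain ⟨φ₁, h₁⟩ := hproj g₁
  obtain ⟨φ₂, h₂⟩ := hproj g₂
  -- the projective commutator is a scalar
  have hmulapp : ∀ (g h : Multiplicative (ZMod 3 × ZMod 3)) p, ρ (g * h) p = ρ g (ρ h p) := by
    intro g h p
    rw [map_mul]
    rfl
  have hcommP : ∀ p, projMap (φ₂.trans φ₁) p = projMap (φ₁.trans φ₂) p := by
    intro p
    rw [projMap_trans, projMap_trans, ← h₂ p, ← h₁ p, ← h₁ (ρ g₂ p), ← h₂ (ρ g₁ p),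
      ← hmulapp, ← hmulapp, mul_comm]
  obtain ⟨lamu, hlam'⟩ := scalar_of_projMap_eq _ _ hcommP
  set lam : ℂ := (lamu : ℂ) with hlamdef
  have hlam : ∀ v, φ₁ (φ₂ v) = lam • φ₂ (φ₁ v) := by
    intro v
    have := hlam' v
    simpa [LinearEquiv.trans_apply] using this
  have hlam0 : lam ≠ 0 := lamu.ne_zero
  -- cubes are scalars
  have cube_scalar : ∀ (g : Multiplicative (ZMod 3 × ZMod 3))
      (φ : (Fin 3 → ℂ) ≃ₗ[ℂ] (Fin 3 → ℂ)), (∀ p, ρ g p = projMap φ p) →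
      ∃ c : ℂˣ, ∀ v, φ (φ (φ v)) = (c : ℂ) • v := by
    intro g φ hφ
    have h3 : ∀ p, projMap ((φ.trans φ).trans φ) p = projMap (LinearEquiv.refl ℂ _) p := by
      intro p
      rw [projMap_trans, projMap_trans, ← hφ, ← hφ, ← hφ, ← hmulapp, ← hmulapp,
        cube_one g, projMap_refl, map_one]
      rfl
    obtain ⟨c, hc⟩ := scalar_of_projMap_eq _ _ h3
    exact ⟨c, fun v => by simpa [LinearEquiv.trans_apply] using hc v⟩
  obtain ⟨c₁u, hc₁⟩ := cube_scalar g₁ φ₁ h₁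
  obtain ⟨c₂u, hc₂⟩ := cube_scalar g₂ φ₂ h₂
  set c₁ : ℂ := (c₁u : ℂ) with hc₁def
  set c₂ : ℂ := (c₂u : ℂ) with hc₂def
  -- lam³ = 1
  have hlam3 : lam ^ 3 = 1 := by
    set v0 : (Fin 3 → ℂ) := (fun i => if i = 0 then 1 else 0) with hv0def
    have hv0 : v0 ≠ 0 := fun h => by simpa [hv0def] using congrFun h 0
    have hφv0 : φ₁ v0 ≠ 0 := by simpa using (φ₁.map_ne_zero_iff).2 hv0
    have e1 : φ₁ (φ₂ (φ₂ (φ₂ v0))) = c₂ • φ₁ v0 := by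
      rw [hc₂ v0, map_smul]
    have e2 : φ₁ (φ₂ (φ₂ (φ₂ v0))) = (lam ^ 3 * c₂) • φ₁ v0 := by
      rw [hlam (φ₂ (φ₂ v0)), hlam (φ₂ v0), map_smul, hlam v0, map_smul, map_smul, hc₂ (φ₁ v0)]
      module
    have : (c₂ - lam ^ 3 * c₂) • φ₁ v0 = 0 := by
      rw [sub_smul, ← e1, ← e2, sub_self]
    rcases smul_eq_zero.1 this with h | h
    · have hc₂0 : c₂ ≠ 0 := c₂u.ne_zero
      have h' : c₂ * (1 - lam ^ 3) = 0 := by linear_combination h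
      rcases mul_eq_zero.1 h' with h'' | h''
      · exact absurd h'' hc₂0
      · linear_combination -h''
    · exact absurd h hφv0
  by_cases hlam1 : lam = 1
  · -- contradiction branch : the lifts commute on the nose
    exfalso
    have hc : ∀ u, φ₁ (φ₂ u) = φ₂ (φ₁ u) := by
      intro u
      rw [hlam u, hlam1, one_smul]
    -- a primitive cube root of unity
    obtain ⟨ζ, hζp⟩ : ∃ z : ℂ, IsPrimitiveRoot z 3 :=
      ⟨_, Complex.isPrimitiveRoot_exp 3 (by norm_num)⟩
    have hζ3 : ζ ^ 3 = 1 := hζp.pow_eq_one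
    have hζ1 : ζ ≠ 1 := hζp.ne_one (by norm_num)
    have hζ0 : ζ ≠ 0 := by
      intro h
      rw [h] at hζ3
      norm_num at hζ3
    have hsum : ζ ^ 2 + ζ + 1 = 0 := by
      have h' : (ζ - 1) * (ζ ^ 2 + ζ + 1) = 0 := by linear_combination hζ3
      rcases mul_eq_zero.1 h' with h'' | h''
      · exact absurd (sub_eq_zero.1 h'') hζ1
      · exact h''
    -- a cube root of c₁
    obtain ⟨a, ha3⟩ := IsAlgClosed.exists_pow_nat_eq c₁ (n := 3) (by norm_num)
    have ha0 : a ≠ 0 := by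
      intro h
      apply c₁u.ne_zero
      rw [← hc₁def, ← ha3, h]
      ring
    have hc₁' : ∀ u, φ₁ (φ₁ (φ₁ u)) = a ^ 3 • u := by
      intro u
      rw [hc₁ u, ha3]
    -- spectral projections of φ₁
    have hP0eig : ∀ u, φ₁ ((3*a^2)⁻¹ • (φ₁ (φ₁ u) + a • φ₁ u + (a^2) • u)) =
        a • ((3*a^2)⁻¹ • (φ₁ (φ₁ u) + a • φ₁ u + (a^2) • u)) := by
      intro u
      rw [map_smul, map_add, map_add, map_smul, map_smul, hc₁' u]
      match_scalars <;> field_simp <;> ring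
    have hP1eig : ∀ u, φ₁ ((3*a^2*ζ^2)⁻¹ • (φ₁ (φ₁ u) + (a*ζ) • φ₁ u + (a^2*ζ^2) • u)) =
        (a*ζ) • ((3*a^2*ζ^2)⁻¹ • (φ₁ (φ₁ u) + (a*ζ) • φ₁ u + (a^2*ζ^2) • u)) := by
      intro u
      rw [map_smul, map_add, map_add, map_smul, map_smul, hc₁' u]
      match_scalars <;> field_simp [ha0, hζ0] <;>
        first
          | ring1
          | linear_combination (-a^3) * hζ3
          | linear_combination -hζ3
    have hP2eig : ∀ u, φ₁ ((3*a^2*ζ^4)⁻¹ • (φ₁ (φ₁ u) + (a*ζ^2) • φ₁ u + (a^2*ζ^4) • u)) =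
        (a*ζ^2) • ((3*a^2*ζ^4)⁻¹ • (φ₁ (φ₁ u) + (a*ζ^2) • φ₁ u + (a^2*ζ^4) • u)) := by
      intro u
      rw [map_smul, map_add, map_add, map_smul, map_smul, hc₁' u]
      match_scalars <;> field_simp [ha0, hζ0] <;>
        first
          | ring1
          | linear_combination (-a^3*(ζ^3+1)) * hζ3
          | linear_combination (-(ζ^3+1)) * hζ3
    have hPsum : ∀ u : Fin 3 → ℂ,
        (3*a^2)⁻¹ • (φ₁ (φ₁ u) + a • φ₁ u + (a^2) • u)
        + (3*a^2*ζ^2)⁻¹ • (φ₁ (φ₁ u) + (a*ζ) • φ₁ u + (a^2*ζ^2) • u)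
        + (3*a^2*ζ^4)⁻¹ • (φ₁ (φ₁ u) + (a*ζ^2) • φ₁ u + (a^2*ζ^4) • u) = u := by
      intro u
      have h3 : (3 : ℂ) ≠ 0 := by norm_num
      have t1 : (3*a^2 : ℂ) ≠ 0 := mul_ne_zero h3 (pow_ne_zero 2 ha0)
      have t2 : (3*a^2*ζ^2 : ℂ) ≠ 0 := mul_ne_zero t1 (pow_ne_zero 2 hζ0)
      have t3 : (3*a^2*ζ^4 : ℂ) ≠ 0 := mul_ne_zero t1 (pow_ne_zero 4 hζ0)
      have hden : (3*a^2*(3*a^2*ζ^2)*(3*a^2*ζ^4) : ℂ) ≠ 0 :=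
        mul_ne_zero (mul_ne_zero t1 t2) t3
      match_scalars <;> field_simp [ha0, hζ0] <;>
        first
          | ring1
          | linear_combination (3*a^2*(ζ^3+ζ+1)) * hζ3 + 3*a^2 * hsum
          | linear_combination (9*a^5*ζ^4) * hsum
          | (rw [div_eq_one_iff_eq hden]; ring1)
          | (rw [div_eq_one_iff_eq hden]; linear_combination (27*a^6*ζ^3) * hζ3 + 27*a^6 * hsum)
          | linear_combination hsum
          | linear_combination ζ * hζ3 + hsum
    -- eigenspaces
    set f : Module.End ℂ (Fin 3 → ℂ) := (φ₁.toLinearMap : Module.End ℂ (Fin 3 → ℂ)) with hfdef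
    set E0 : Submodule ℂ (Fin 3 → ℂ) := Module.End.eigenspace f a with hE0def
    set E1 : Submodule ℂ (Fin 3 → ℂ) := Module.End.eigenspace f (a*ζ) with hE1def
    set E2 : Submodule ℂ (Fin 3 → ℂ) := Module.End.eigenspace f (a*ζ^2) with hE2def
    have hspan : ∀ u : Fin 3 → ℂ, u ∈ E0 ⊔ E1 ⊔ E2 := by
      intro u
      rw [← hPsum u]
      refine add_mem (add_mem ?_ ?_) ?_
      · exact Submodule.mem_sup_left (Submodule.mem_sup_left
          (Module.End.mem_eigenspace_iff.2 (by simpa [hfdef] using hP0eig u)))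
      · exact Submodule.mem_sup_left (Submodule.mem_sup_right
          (Module.End.mem_eigenspace_iff.2 (by simpa [hfdef] using hP1eig u)))
      · exact Submodule.mem_sup_right
          (Module.End.mem_eigenspace_iff.2 (by simpa [hfdef] using hP2eig u))
    -- all eigenspaces are at most one-dimensional
    by_cases hbig : ∃ (μ : ℂ) (x y : Fin 3 → ℂ), x ≠ 0 ∧ (∀ t : ℂ, y ≠ t • x) ∧
        φ₁ x = μ • x ∧ φ₁ y = μ • y
    · obtain ⟨μ, x, y, hx0, hxy, hx, hy⟩ := hbig
      have hinf := infinite_fixed φ₁ x y μ hx0 hxy hx hy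
      have hg1ne : g₁ ≠ 1 := by rw [hg₁]; decide
      have hfin := hfree g₁ hg1ne
      have hset : {p : P2 | ρ g₁ p = p} = {p : P2 | projMap φ₁ p = p} := by
        ext p
        simp only [Set.mem_setOf_eq, h₁ p]
      rw [hset] at hfin
      exact hinf hfin
    · push_neg at hbig
      have hthin : ∀ (μ : ℂ) (x y : Fin 3 → ℂ), x ≠ 0 → φ₁ x = μ • x → φ₁ y = μ • y →
          ∃ t : ℂ, y = t • x := by
        intro μ x y hx0 hx hy
        by_contra hno
        push_neg at hno
        exact (hbig μ x y hx0 hno hx) hy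
      -- each eigenspace has finrank ≤ 1
      have hthinE : ∀ (μ : ℂ) (E : Submodule ℂ (Fin 3 → ℂ)),
          E = Module.End.eigenspace f μ → Module.finrank ℂ E ≤ 1 := by
        intro μ E hE
        by_cases hEbot : E = ⊥
        · rw [hEbot]
          simp [finrank_bot]
        · obtain ⟨x, hxE, hx0⟩ := Submodule.exists_mem_ne_zero_of_ne_bot hEbot
          have hEle : E ≤ Submodule.span ℂ {x} := by
            intro y hyE
            have hx' : φ₁ x = μ • x := by
              have := hxE; rw [hE] at this
              exact Module.End.mem_eigenspace_iff.1 this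
            have hy' : φ₁ y = μ • y := by
              rw [hE] at hyE
              exact Module.End.mem_eigenspace_iff.1 hyE
            obtain ⟨t, ht⟩ := hthin μ x y hx0 hx' hy'
            rw [ht]
            exact Submodule.smul_mem _ t (Submodule.mem_span_singleton_self x)
          calc Module.finrank ℂ E ≤ Module.finrank ℂ (Submodule.span ℂ {x}) :=
                Submodule.finrank_mono hEle
            _ = 1 := finrank_span_singleton hx0
      -- rank count : all three eigenspaces are nonzero
      have htop3 : Module.finrank ℂ (⊤ : Submodule ℂ (Fin 3 → ℂ)) = 3 := by
        rw [finrank_top]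
        simp [Module.finrank_fin_fun]
      have hsupeq : E0 ⊔ E1 ⊔ E2 = ⊤ := by
        rw [eq_top_iff]
        intro u _
        exact hspan u
      have hle3 : (3 : ℕ) ≤ Module.finrank ℂ E0 + Module.finrank ℂ E1 + Module.finrank ℂ E2 := by
        calc (3:ℕ) = Module.finrank ℂ (⊤ : Submodule ℂ (Fin 3 → ℂ)) := htop3.symm
          _ = Module.finrank ℂ ((E0 ⊔ E1 ⊔ E2 : Submodule ℂ (Fin 3 → ℂ))) := by rw [hsupeq]
          _ ≤ Module.finrank ℂ ((E0 ⊔ E1 : Submodule ℂ (Fin 3 → ℂ))) + Module.finrank ℂ E2 :=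
              Submodule.finrank_add_le_finrank_add_finrank _ _
          _ ≤ Module.finrank ℂ E0 + Module.finrank ℂ E1 + Module.finrank ℂ E2 := by
              have := Submodule.finrank_add_le_finrank_add_finrank E0 E1
              omega
      have hr0 : Module.finrank ℂ E0 ≤ 1 := hthinE a E0 hE0def
      have hr1 : Module.finrank ℂ E1 ≤ 1 := hthinE (a*ζ) E1 hE1def
      have hr2 : Module.finrank ℂ E2 ≤ 1 := hthinE (a*ζ^2) E2 hE2def
      have hE0ne : E0 ≠ ⊥ := by
        intro h
        rw [h] at hle3
        rw [finrank_bot] at hle3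
        omega
      have hE1ne : E1 ≠ ⊥ := by
        intro h
        rw [h] at hle3
        rw [finrank_bot] at hle3
        omega
      obtain ⟨x0, hx0E, hx00⟩ := Submodule.exists_mem_ne_zero_of_ne_bot hE0ne
      obtain ⟨x1, hx1E, hx10⟩ := Submodule.exists_mem_ne_zero_of_ne_bot hE1ne
      have hx0e : φ₁ x0 = a • x0 := Module.End.mem_eigenspace_iff.1 (hE0def ▸ hx0E)
      have hx1e : φ₁ x1 = (a*ζ) • x1 := Module.End.mem_eigenspace_iff.1 (hE1def ▸ hx1E)
      -- φ₂ acts on the eigenlines of φ₁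
      obtain ⟨b0, hb0⟩ : ∃ t : ℂ, φ₂ x0 = t • x0 := by
        apply hthin a x0 (φ₂ x0) hx00 hx0e
        rw [hc x0, hx0e, map_smul]
      obtain ⟨b1, hb1⟩ : ∃ t : ℂ, φ₂ x1 = t • x1 := by
        apply hthin (a*ζ) x1 (φ₂ x1) hx10 hx1e
        rw [hc x1, hx1e, map_smul]
      have hb00 : b0 ≠ 0 := by
        intro h
        rw [h, zero_smul] at hb0
        exact ((by simpa using (φ₂.map_ne_zero_iff).2 hx00) : φ₂ x0 ≠ 0) hb0
      have hb10 : b1 ≠ 0 := by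
        intro h
        rw [h, zero_smul] at hb1
        exact ((by simpa using (φ₂.map_ne_zero_iff).2 hx10) : φ₂ x1 ≠ 0) hb1
      have hb03 : b0 ^ 3 = c₂ := by
        have h3 : φ₂ (φ₂ (φ₂ x0)) = (b0^3) • x0 := by
          simp only [hb0, map_smul, smul_smul]
          module
        rw [hc₂ x0] at h3
        have : (b0^3 - c₂) • x0 = 0 := by
          rw [sub_smul, ← h3, sub_self]
        rcases smul_eq_zero.1 this with h' | h'
        · linear_combination h'
        · exact absurd h' hx00
      have hb13 : b1 ^ 3 = c₂ := by
        have h3 : φ₂ (φ₂ (φ₂ x1)) = (b1^3) • x1 := by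
          simp only [hb1, map_smul, smul_smul]
          module
        rw [hc₂ x1] at h3
        have : (b1^3 - c₂) • x1 = 0 := by
          rw [sub_smul, ← h3, sub_self]
        rcases smul_eq_zero.1 this with h' | h'
        · linear_combination h'
        · exact absurd h' hx10
      -- x1 is not proportional to x0
      have hprop : ∀ t : ℂ, x1 ≠ t • x0 := by
        intro t ht
        have ht0 : t ≠ 0 := by
          intro h
          rw [h, zero_smul] at ht
          exact hx10 ht
        have h1 : φ₁ x1 = (t * a) • x0 := by
          rw [ht, map_smul, hx0e]
          module
        have h2 : φ₁ x1 = (a * ζ * t) • x0 := by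
          rw [hx1e, ht]
          module
        have h3 : (t*a - a*ζ*t) • x0 = 0 := by
          rw [sub_smul, ← h1, ← h2, sub_self]
        rcases smul_eq_zero.1 h3 with h' | h'
        · apply hζ1
          have : t * a * (1 - ζ) = 0 := by linear_combination h'
          rcases mul_eq_zero.1 this with h'' | h''
          · rcases mul_eq_zero.1 h'' with h3 | h3
            · exact absurd h3 ht0
            · exact absurd h3 ha0
          · linear_combination -h''
        · exact absurd h' hx00
      -- the common-eigenvalue contradiction machine
      have final : ∀ (g : Multiplicative (ZMod 3 × ZMod 3))
          (Φ : (Fin 3 → ℂ) ≃ₗ[ℂ] (Fin 3 → ℂ)) (μ : ℂ),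
          g ≠ 1 → (∀ p, ρ g p = projMap Φ p) → Φ x0 = μ • x0 → Φ x1 = μ • x1 → False := by
        intro g Φ μ hg hΦ hx0f hx1f
        have hinf := infinite_fixed Φ x0 x1 μ hx00 hprop hx0f hx1f
        have hfin := hfree g hg
        have hset : {p : P2 | ρ g p = p} = {p : P2 | projMap Φ p = p} := by
          ext p
          simp only [Set.mem_setOf_eq, hΦ p]
        rw [hset] at hfin
        exact hinf hfin
      -- b0/b1 is a cube root of unity
      have hq3 : (b0 * b1⁻¹) ^ 3 = 1 := by
        field_simp
        rw [hb03, hb13]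
      rcases cube_roots ζ hζp _ hq3 with hq | hq | hq
      · -- b0 = b1 : use g₂ itself
        have hb : b0 = b1 := by
          field_simp at hq
          exact hq
        apply final g₂ φ₂ b0 (by rw [hg₂]; decide) h₂ hb0
        rw [hb1, hb]
      · -- b0 = ζ b1 : use g₁ g₂
        have hb : b0 = ζ * b1 := by
          field_simp at hq
          linear_combination hq
        have hΦ : ∀ p, ρ (g₁ * g₂) p = projMap (φ₂.trans φ₁) p := by
          intro p
          rw [hmulapp, h₂, h₁, ← projMap_trans]
        apply final (g₁ * g₂) (φ₂.trans φ₁) (a * b0) (by rw [hg₁, hg₂]; decide) hΦ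
        · show φ₁ (φ₂ x0) = (a * b0) • x0
          simp only [hb0, map_smul, hx0e, smul_smul]
          match_scalars
          ring1
        · show φ₁ (φ₂ x1) = (a * b0) • x1
          simp only [hb1, map_smul, hx1e, smul_smul]
          match_scalars
          linear_combination (-a) * hb
      · -- b0 = ζ² b1 : use g₁ g₁ g₂
        have hb : b0 = ζ^2 * b1 := by
          field_simp at hq
          linear_combination hq
        have hΦ : ∀ p, ρ (g₁ * (g₁ * g₂)) p = projMap (φ₂.trans (φ₁.trans φ₁)) p := by
          intro p
          rw [hmulapp, hmulapp, h₂, h₁, h₁, ← projMap_trans, ← projMap_trans]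
        apply final (g₁ * (g₁ * g₂)) (φ₂.trans (φ₁.trans φ₁)) (a^2 * b0)
          (by rw [hg₁, hg₂]; decide) hΦ
        · show φ₁ (φ₁ (φ₂ x0)) = (a^2 * b0) • x0
          simp only [hb0, map_smul, hx0e, smul_smul]
          match_scalars
          ring1
        · show φ₁ (φ₁ (φ₂ x1)) = (a^2 * b0) • x1
          simp only [hb1, map_smul, hx1e, smul_smul]
          match_scalars
          linear_combination (-a^2) * hb
  · -- main branch : lam is a primitive cube root of unity
    have hprimlam : IsPrimitiveRoot lam 3 := prim_of_cube lam hlam3 hlam1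
    have hlam2ne1 : lam ^ 2 ≠ 1 := by
      intro h
      apply hlam1
      linear_combination hlam3 - lam * h
    have hlamnelam2 : lam ≠ lam ^ 2 := by
      intro h
      apply hlam1
      linear_combination (lam + 1) * h + hlam3
    -- an eigenvector of φ₁
    obtain ⟨a, ha⟩ := Module.End.exists_eigenvalue (φ₁.toLinearMap : Module.End ℂ (Fin 3 → ℂ))
    obtain ⟨v, hv⟩ := ha.exists_hasEigenvector
    have hva : φ₁.toLinearMap v = a • v := Module.End.mem_eigenspace_iff.1 hv.1
    have hv0 : v ≠ 0 := hv.2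
    have hva' : φ₁ v = a • v := hva
    have ha0 : a ≠ 0 := by
      intro h
      rw [h, zero_smul] at hva'
      exact hv0 (φ₁.map_eq_zero_iff.1 hva')
    -- a cube root of c₂
    obtain ⟨c, hc3⟩ := IsAlgClosed.exists_pow_nat_eq c₂ (n := 3) (by norm_num)
    have hc0 : c ≠ 0 := by
      intro h
      apply c₂u.ne_zero
      rw [← hc₂def, ← hc3, h]
      ring
    -- the new basis
    set w : Fin 3 → (Fin 3 → ℂ) := ![v, (c⁻¹)^2 • φ₂ (φ₂ v), c⁻¹ • φ₂ v] with hwdef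
    set d : Fin 3 → ℂ := ![1, lam^2, lam] with hddef
    have hw0 : w 0 = v := rfl
    have hw1 : w 1 = (c⁻¹)^2 • φ₂ (φ₂ v) := rfl
    have hw2 : w 2 = c⁻¹ • φ₂ v := rfl
    have hphi2v : φ₂ v ≠ 0 := by simpa using (φ₂.map_ne_zero_iff).2 hv0
    have hphi22v : φ₂ (φ₂ v) ≠ 0 := by simpa using (φ₂.map_ne_zero_iff).2 hphi2v
    have hwne : ∀ j, w j ≠ 0 := by
      intro j
      fin_cases j
      · exact hv0
      · exact smul_ne_zero (pow_ne_zero 2 (inv_ne_zero hc0)) hphi22v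
      · exact smul_ne_zero (inv_ne_zero hc0) hphi2v
    -- eigenvector equations for φ₁
    have e1 : φ₁ (φ₂ v) = (lam * a) • φ₂ v := by
      rw [hlam, hva']
      rw [map_smul]
      module
    have e2 : φ₁ (φ₂ (φ₂ v)) = (lam^2 * a) • φ₂ (φ₂ v) := by
      rw [hlam, e1, map_smul]
      module
    have hweig : ∀ j, φ₁ (w j) = (a * d j) • w j := by
      intro j
      fin_cases j
      · simpa [hddef, hwdef] using hva'
      · show φ₁ ((c⁻¹)^2 • φ₂ (φ₂ v)) = _
        rw [map_smul, e2]
        show _ = (a * lam ^ 2) • (c⁻¹)^2 • φ₂ (φ₂ v)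
        module
      · show φ₁ (c⁻¹ • φ₂ v) = _
        rw [map_smul, e1]
        show _ = (a * lam) • c⁻¹ • φ₂ v
        module
    -- linear independence
    have hinj : Function.Injective (fun j => a * d j) := by
      intro i j hij
      simp only at hij
      have hdij : d i = d j := mul_left_cancel₀ ha0 hij
      fin_cases i <;> fin_cases j <;>
        simp only [hddef, Matrix.cons_val_zero, Matrix.cons_val_one, Matrix.head_cons,
          Matrix.cons_val_two, Matrix.tail_cons, Fin.isValue] at hdij <;>
        first
          | rfl
          | exact (hlam2ne1 hdij.symm).elim
          | exact (hlam1 hdij.symm).elim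
          | exact (hlam2ne1 hdij).elim
          | exact (hlam1 hdij).elim
          | exact (hlamnelam2 hdij).elim
          | exact (hlamnelam2 hdij.symm).elim
    have hind : LinearIndependent ℂ w := by
      apply Module.End.eigenvectors_linearIndependent' (φ₁.toLinearMap : Module.End ℂ (Fin 3 → ℂ))
        (fun j => a * d j) hinj w
      intro j
      exact ⟨Module.End.mem_eigenspace_iff.2 (hweig j), hwne j⟩
    have hcard : Fintype.card (Fin 3) = Module.finrank ℂ (Fin 3 → ℂ) := by
      simp [Module.finrank_fin_fun]
    set b := basisOfLinearIndependentOfCardEqFinrank hind hcard with hbdef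
    have hb : ∀ j, b j = w j := by
      intro j
      rw [hbdef, coe_basisOfLinearIndependentOfCardEqFinrank]
    set ψ := (Pi.basisFun ℂ (Fin 3)).equiv b (Equiv.refl _) with hψdef
    have hψ : ∀ j, ψ (Pi.single j 1) = w j := by
      intro j
      have h' := (Pi.basisFun ℂ (Fin 3)).equiv_apply (i := j) (b' := b) (e := Equiv.refl _)
      rw [Pi.basisFun_apply] at h'
      rw [hψdef]
      rw [h', Equiv.refl_apply, hb]
    have hψs : ∀ j, ψ.symm (w j) = Pi.single j 1 := by
      intro j
      rw [← hψ j, LinearEquiv.symm_apply_apply]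
    set ω : ℂˣ := lamu ^ 2 with hωdef
    have hω2 : ((ω : ℂˣ) : ℂ) = lam ^ 2 := by
      rw [hωdef]; push_cast [hlamdef]; ring
    have hωsq : ((ω ^ 2 : ℂˣ) : ℂ) = lam := by
      push_cast [hωdef, hlamdef]
      linear_combination lam * hlam3
    have hdiag : ∀ j : Fin 3, (diagEquiv ![1, ω, ω ^ 2]) ((Pi.single j 1 : Fin 3 → ℂ)) =
        d j • (Pi.single j 1 : Fin 3 → ℂ) := by
      intro j
      funext i
      have : (diagEquiv ![1, ω, ω ^ 2]) (Pi.single j 1) i =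
          ((![1, ω, ω ^ 2] i : ℂˣ) : ℂ) * (Pi.single j 1 : Fin 3 → ℂ) i := rfl
      rw [this]
      rcases eq_or_ne i j with h | h
      · subst h
        simp only [Pi.single_eq_same, Pi.smul_apply, smul_eq_mul, mul_one]
        fin_cases i
        · simp [hddef]
        · simpa [hddef] using hω2
        · simpa [hddef] using hωsq
      · simp [Pi.single_eq_of_ne h]
    have hcyc : ∀ j : Fin 3, cycEquiv ((Pi.single j 1 : Fin 3 → ℂ)) =
        (Pi.single (j - 1) 1 : Fin 3 → ℂ) := by
      intro j
      funext i
      have hrfl : cycEquiv ((Pi.single j 1 : Fin 3 → ℂ)) i =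
          (Pi.single j 1 : Fin 3 → ℂ) (i + 1) := rfl
      rw [hrfl]
      show (Pi.single j 1 : Fin 3 → ℂ) (i + 1) = (Pi.single (j - 1) 1 : Fin 3 → ℂ) i
      rcases eq_or_ne i (j - 1) with h | h
      · subst h
        have : j - 1 + 1 = j := by omega
        rw [this]
        simp
      · have h2 : i + 1 ≠ j := by
          intro h3
          apply h
          omega
        rw [Pi.single_eq_of_ne h2, Pi.single_eq_of_ne h]
    -- conclusion
    refine ⟨g₁, g₂, by rw [hg₁, hg₂]; exact closure_gens, ψ, ω, ?_, ?_, ?_⟩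
    · rw [hω2]
      exact prim_of_cube _ (by linear_combination (lam ^ 3 + 1) * hlam3) hlam2ne1
    · -- g₁ acts diagonally
      intro p
      rw [h₁ p]
      apply projMap_eq_of_smul φ₁ _ a ha0 _ p
      have hmaps : φ₁.toLinearMap =
          a • (((ψ.symm.trans (diagEquiv ![1, ω, ω ^ 2])).trans ψ).toLinearMap) := by
        apply b.ext
        intro j
        rw [hb j]
        simp only [LinearMap.smul_apply, LinearEquiv.coe_coe, LinearEquiv.trans_apply]
        rw [hψs j, hdiag j, map_smul, hψ j, hweig j]
        module
      intro u
      have := LinearMap.congr_fun hmaps u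
      simpa using this
    · -- g₂ acts by the cycle
      intro p
      rw [h₂ p]
      apply projMap_eq_of_smul φ₂ _ c hc0 _ p
      have hphi2w : ∀ j, φ₂ (w j) = c • w (j - 1) := by
        intro j
        fin_cases j
        · show φ₂ v = c • w (0 - 1)
          have : (0 : Fin 3) - 1 = 2 := by decide
          rw [this, hw2]
          rw [smul_smul, mul_inv_cancel₀ hc0, one_smul]
        · show φ₂ ((c⁻¹)^2 • φ₂ (φ₂ v)) = c • w (1 - 1)
          have h11 : (1 : Fin 3) - 1 = 0 := by decide
          rw [h11, hw0, map_smul, hc₂ v, smul_smul]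
          have hcoef : c⁻¹ ^ 2 * c₂ = c := by
            rw [← hc3]
            field_simp
          rw [hcoef]
        · show φ₂ (c⁻¹ • φ₂ v) = c • w (2 - 1)
          have h21 : (2 : Fin 3) - 1 = 1 := by decide
          rw [h21, hw1, map_smul, smul_smul]
          have hcoef : c * c⁻¹ ^ 2 = c⁻¹ := by
            field_simp
          rw [hcoef]
      have hmaps : φ₂.toLinearMap =
          c • (((ψ.symm.trans cycEquiv).trans ψ).toLinearMap) := by
        apply b.ext
        intro j
        rw [hb j]
        simp only [LinearMap.smul_apply, LinearEquiv.coe_coe, LinearEquiv.trans_apply]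
        rw [hψs j, hcyc j, hψ (j-1), hphi2w j]
      intro u
      have := LinearMap.congr_fun hmaps u
      simpa using this


end
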